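/- Let N be an abelian group, n ≥ 1 an integer, and H a finite subgroup of N. Suppose that for every integer m ≥ 1 there are endomorphisms F_m, V_m : N → N such that: (i) for all x ∈ N, (2+mn)•F_m(V_m(x)) − F_m(V_m(F_m(V_m(x)))) = (1+mn)•x; and (ii) there exists r ∈ ℕ such that F_m(h) = 0 for all h ∈ H and all m ≥ r. Then there exists an integer m ≥ 1 such that gcd(1+mn, |H|) = 1, F_m vanishes on H, the restriction of V_m to H is injective, and V_m(H) ∩ H = {0}; in particular N contains a subgroup isomorphic to H × H. -/
import Mathlib


/-- **Doubling step in the proof of Theorem B.** Given the Farrell identity for all `m ≥ 1`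
and an `r` such that `F m` vanishes on the finite subgroup `H` for all `m ≥ r`, there is an
`m ≥ 1` with `gcd(1+mn, |H|) = 1` such that `F m` vanishes on `H`, `V m` is injective on `H`,
and `V m (H) ∩ H = {0}`; in particular `N` contains a subgroup isomorphic to `H × H`. -/
theorem doubling_of_finite_subgroup
    (N : Type*) [AddCommGroup N] (n : ℕ) (hn : 1 ≤ n)
    (H : AddSubgroup N) (hHfin : Finite H)
    (F V : ℕ → N →+ N)
    (h1 : ∀ m : ℕ, 1 ≤ m → ∀ x : N,
      (2 + m * n) • F m (V m x) - F m (V m (F m (V m x))) = (1 + m * n) • x)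
    (r : ℕ) (h2 : ∀ h ∈ H, ∀ m : ℕ, r ≤ m → F m h = 0) :
    ∃ m : ℕ, 1 ≤ m ∧ Nat.gcd (1 + m * n) (Nat.card H) = 1 ∧
      (∀ h ∈ H, F m h = 0) ∧
      Set.InjOn (V m) (H : Set N) ∧
      (H.map (V m)) ⊓ H = ⊥ ∧
      ∃ K : AddSubgroup N, Nonempty (K ≃+ (H × H)) := by
  set c : ℕ := Nat.card H with hc
  have hcpos : 0 < c := Nat.card_pos
  set m : ℕ := (r + 1) * c with hm
  have hmr1 : r + 1 ≤ m := by
    calc r + 1 = (r + 1) * 1 := (Nat.mul_one _).symm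
    _ ≤ (r + 1) * c := Nat.mul_le_mul_left _ hcpos
  have hm1 : 1 ≤ m := le_trans (by omega) hmr1
  have hmr : r ≤ m := le_trans (by omega) hmr1
  have hgcd : Nat.gcd (1 + m * n) c = 1 := by
    have : 1 + m * n = 1 + c * ((r + 1) * n) := by ring
    rw [this]
    simpa [Nat.Coprime] using (Nat.coprime_add_mul_left_left 1 c ((r+1)*n)).mpr
      (Nat.coprime_one_left c)
  have hFvan : ∀ h ∈ H, F m h = 0 := fun h hh => h2 h hh m hmr
  -- key: (1+mn)•x = 0 with x ∈ H implies x = 0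
  have key : ∀ x ∈ H, (1 + m * n) • x = 0 → x = 0 := by
    intro x hx hxz
    have hxz' : (1 + m * n) • (⟨x, hx⟩ : H) = 0 := by
      ext; simpa using hxz
    have hdvd : addOrderOf (⟨x, hx⟩ : H) ∣ 1 + m * n :=
      addOrderOf_dvd_of_nsmul_eq_zero hxz'
    have hdvd2 : addOrderOf (⟨x, hx⟩ : H) ∣ c := addOrderOf_dvd_natCard _
    have : addOrderOf (⟨x, hx⟩ : H) ∣ 1 := hgcd ▸ Nat.dvd_gcd hdvd hdvd2
    have h1' : addOrderOf (⟨x, hx⟩ : H) = 1 := Nat.dvd_one.mp this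
    have : (⟨x, hx⟩ : H) = 0 := AddMonoid.addOrderOf_eq_one_iff.mp h1'
    simpa using congrArg Subtype.val this
  have hinj : Set.InjOn (V m) (H : Set N) := by
    intro x hx y hy hxy
    have ex := h1 m hm1 x
    have ey := h1 m hm1 y
    rw [hxy] at ex
    have : (1 + m * n) • (x - y) = 0 := by
      rw [smul_sub, ← ex, ← ey]; abel
    exact sub_eq_zero.mp (key (x - y) (H.sub_mem hx hy) this)
  have hinf : (H.map (V m)) ⊓ H = ⊥ := by
    rw [eq_bot_iff]
    intro y hy
    obtain ⟨⟨x, hx, rfl⟩, hyH⟩ := hy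
    have hFy : F m (V m x) = 0 := hFvan _ hyH
    have ex := h1 m hm1 x
    rw [hFy] at ex
    simp only [smul_zero, map_zero, zero_sub, neg_zero] at ex
    have hx0 : x = 0 := key x hx ex.symm
    simp [hx0, AddSubgroup.mem_bot]
  refine ⟨m, hm1, hgcd, hFvan, hinj, hinf, ?_⟩
  -- build the embedding H × H →+ N, (a,b) ↦ V m a + b
  set φ : (H × H) →+ N := ((V m).comp H.subtype).coprod H.subtype with hφ
  have hφinj : Function.Injective φ := by
    rw [injective_iff_map_eq_zero]
    rintro ⟨a, b⟩ hab
    have hab' : V m (a : N) + (b : N) = 0 := hab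
    have hVa : V m (a : N) ∈ (H.map (V m)) ⊓ H := by
      constructor
      · exact ⟨a, a.2, rfl⟩
      · have h' : V m (a : N) = -(b : N) := by
          rw [eq_neg_iff_add_eq_zero]; exact hab'
        rw [h']; exact H.neg_mem b.2
    rw [hinf, AddSubgroup.mem_bot] at hVa
    have hb0 : (b : N) = 0 := by rw [hVa] at hab'; simpa using hab'
    have ha0 : (a : N) = 0 := by
      have : V m (a : N) = V m 0 := by simpa using hVa
      exact hinj a.2 H.zero_mem this
    ext <;> simp [ha0, hb0]
  exact ⟨φ.range, ⟨(AddMonoidHom.ofInjective hφinj).symm⟩⟩
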